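/- For the two-type incentive process with game matrix entries a=d=0, b=c=1, replicator incentive, and symmetric mutation rate μ ∈ (0,1), the stationary distribution is s_{(0,N)} = s_{(N,0)} = 1/(2 + 2μ(2^N − 2)) and s_{(j,N−j)} = (2μ/(2 + 2μ(2^N − 2)))·C(N,j) for 0 < j < N; in particular, for N ≥ 2 and even N, the unique maximum among interior states occurs at j = N/2. -/

import Mathlib

open Finset

private lemma sum_tri {N : ℕ} (g : ℕ → ℝ) (j : ℕ) (hj0 : 0 < j) (hjN : j < N)
    (hz : ∀ i, i ≤ N → 1 < max (i - j) (j - i) → g i = 0) :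
    ∑ i ∈ Finset.range (N + 1), g i = g (j - 1) + g j + g (j + 1) := by
  have hsub : ({j - 1, j, j + 1} : Finset ℕ) ⊆ Finset.range (N + 1) := by
    intro i hi; simp only [Finset.mem_insert, Finset.mem_singleton] at hi
    simp only [Finset.mem_range]; omega
  rw [← Finset.sum_subset hsub]
  · rw [Finset.sum_insert (by simp only [Finset.mem_insert, Finset.mem_singleton]; omega),
        Finset.sum_insert (by simp only [Finset.mem_singleton]; omega),
      Finset.sum_singleton]
    ring
  · intro i hi hni
    simp only [Finset.mem_insert, Finset.mem_singleton, not_or] at hni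
    simp only [Finset.mem_range] at hi
    apply hz i (by omega)
    rcases (show 2 ≤ i - j ∨ 2 ≤ j - i by omega) with h | h
    · exact lt_of_lt_of_le (by norm_num) (le_max_of_le_left h)
    · exact lt_of_lt_of_le (by norm_num) (le_max_of_le_right h)

private lemma sum_pair {N : ℕ} (hN : 1 ≤ N) (g : ℕ → ℝ)
    (hz : ∀ i, i ≤ N → 1 < max (i - 0) (0 - i) → g i = 0) :
    ∑ i ∈ Finset.range (N + 1), g i = g 0 + g 1 := by
  have hsub : ({0, 1} : Finset ℕ) ⊆ Finset.range (N + 1) := by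
    intro i hi; simp only [Finset.mem_insert, Finset.mem_singleton] at hi
    simp only [Finset.mem_range]; omega
  rw [← Finset.sum_subset hsub]
  · rw [Finset.sum_insert (by simp), Finset.sum_singleton]
  · intro i hi hni
    simp only [Finset.mem_insert, Finset.mem_singleton, not_or] at hni
    simp only [Finset.mem_range] at hi
    apply hz i (by omega)
    exact lt_of_lt_of_le (by norm_num) (le_max_of_le_left (show 2 ≤ i - 0 by omega))

private lemma choose_lt_middle {N j : ℕ} (hN2 : 2 ≤ N) (hNe : Even N) (hj : j ≤ N)
    (hne : j ≠ N / 2) : N.choose j < N.choose (N / 2) := by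
  have hmod : N % 2 = 0 := Nat.even_iff.mp hNe
  have step : ∀ k, 2 * k < N → N.choose k < N.choose (k + 1) := by
    intro k hk
    have h1 : N.choose (k + 1) * (k + 1) = N.choose k * (N - k) :=
      Nat.choose_succ_right_eq N k
    have hpos : 0 < N.choose k := Nat.choose_pos (by omega)
    have h2 : N.choose k * (k + 1) < N.choose k * (N - k) :=
      mul_lt_mul_of_pos_left (show k + 1 < N - k by omega) hpos
    rw [← h1] at h2
    exact Nat.lt_of_mul_lt_mul_right h2
  have mono : ∀ b, b ≤ N / 2 → ∀ a, a < b → N.choose a < N.choose b := by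
    intro b
    induction b with
    | zero => intro _ a ha; omega
    | succ c ih =>
      intro hb a ha
      have hstep : N.choose c < N.choose (c + 1) := step c (by omega)
      rcases Nat.lt_or_ge a c with h | h
      · exact lt_trans (ih (by omega) a h) hstep
      · have : a = c := by omega
        subst this; exact hstep
  rcases Nat.lt_or_ge j (N / 2) with h | h
  · exact mono (N / 2) (le_refl _) j h
  · have hjgt : N / 2 < j := by omega
    have hsymm : N.choose (N - j) = N.choose j := Nat.choose_symm hj
    rw [← hsymm]
    exact mono (N / 2) (le_refl _) (N - j) (by omega)

theorem stationary_distribution_closed_form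
    {N : ℕ} (hN : 2 ≤ N) (μ : ℝ) (hμ0 : 0 < μ) (hμ1 : μ < 1)
    (T : ℕ → ℕ → ℝ) (s : ℕ → ℝ)
    (htri : ∀ i j, i ≤ N → j ≤ N → 1 < max (i - j) (j - i) → T i j = 0)
    (hrow : ∀ i, i ≤ N → ∑ j ∈ Finset.range (N + 1), T i j = 1)
    (hT01 : T 0 1 = μ) (hTN : T N (N - 1) = μ)
    (hTup : ∀ j, 0 < j → j < N → T j (j + 1) = ((N : ℝ) - j) / (2 * N))
    (hTdown : ∀ j, 0 < j → j < N → T j (j - 1) = (j : ℝ) / (2 * N))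
    (hs0 : ∀ i, i ≤ N → 0 ≤ s i) (hs1 : ∑ i ∈ Finset.range (N + 1), s i = 1)
    (hstat : ∀ j, j ≤ N → ∑ i ∈ Finset.range (N + 1), s i * T i j = s j) :
    s 0 = 1 / (2 + 2 * μ * (2 ^ N - 2)) ∧
    s N = 1 / (2 + 2 * μ * (2 ^ N - 2)) ∧
    (∀ j, 0 < j → j < N → s j = (2 * μ / (2 + 2 * μ * (2 ^ N - 2))) * (N.choose j)) ∧
    (Even N → ∀ j, 0 < j → j < N → j ≠ N / 2 → s j < s (N / 2)) := by
  have hNpos : 0 < N := by omega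
  have hNR : (0:ℝ) < N := by exact_mod_cast hNpos
  have hNne : (N:ℝ) ≠ 0 := hNR.ne'
  -- detailed balance
  have bal : ∀ j, j < N → s j * T j (j + 1) = s (j + 1) * T (j + 1) j := by
    intro j
    induction j with
    | zero =>
      intro _
      have hsum : ∑ i ∈ Finset.range (N + 1), s i * T i 0 = s 0 * T 0 0 + s 1 * T 1 0 :=
        sum_pair (by omega) _ (fun i hi h => by rw [htri i 0 hi (by omega) h, mul_zero])
      have hrow0 : ∑ k ∈ Finset.range (N + 1), T 0 k = T 0 0 + T 0 1 :=
        sum_pair (by omega) _ (fun i hi h => htri 0 i (by omega) hi (by simpa [max_comm] using h))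
      have hst := hstat 0 (by omega)
      rw [hsum] at hst
      have hr := hrow 0 (by omega)
      rw [hrow0] at hr
      have hmul : s 0 * T 0 0 + s 0 * T 0 1 = s 0 := by
        rw [← mul_add, hr, mul_one]
      linarith
    | succ k ih =>
      intro hk
      have ihk := ih (by omega)
      have hsum : ∑ i ∈ Finset.range (N + 1), s i * T i (k + 1)
          = s k * T k (k + 1) + s (k + 1) * T (k + 1) (k + 1) + s (k + 2) * T (k + 2) (k + 1) := by
        have h := sum_tri (fun i => s i * T i (k + 1)) (k + 1) (by omega) hk
          (fun i hi h => by show s i * T i (k + 1) = 0; rw [htri i (k + 1) hi (by omega) h, mul_zero])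
        simpa using h
      have hrowk : T (k + 1) k + T (k + 1) (k + 1) + T (k + 1) (k + 2) = 1 := by
        have h := sum_tri (fun i => T (k + 1) i) (k + 1) (by omega) hk
          (fun i hi h => htri (k + 1) i (by omega) hi (by simpa [max_comm] using h))
        rw [hrow (k + 1) (by omega)] at h
        simpa using h.symm
      have hst := hstat (k + 1) (by omega)
      rw [hsum] at hst
      have hmul : s (k + 1) * T (k + 1) k + s (k + 1) * T (k + 1) (k + 1)
          + s (k + 1) * T (k + 1) (k + 2) = s (k + 1) := by
        have h := congrArg (fun x => s (k + 1) * x) hrowk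
        simp only [mul_add, mul_one] at h
        linarith [h]
      show s (k + 1) * T (k + 1) (k + 2) = s (k + 2) * T (k + 2) (k + 1)
      linarith
  -- closed form for interior states
  have hform : ∀ j, 0 < j → j < N → s j = 2 * μ * s 0 * (N.choose j : ℝ) := by
    intro j
    induction j with
    | zero => intro h; omega
    | succ k ih =>
      intro _ hk1
      rcases Nat.eq_zero_or_pos k with hk0 | hkpos
      · subst hk0
        have hb := bal 0 (by omega)
        have hd := hTdown 1 (by omega) (by omega)
        simp only [Nat.sub_self, Nat.cast_one] at hd
        rw [hT01, hd] at hb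
        rw [Nat.choose_one_right]
        field_simp at hb
        push_cast
        linear_combination -hb
      · have hsk := ih hkpos (by omega)
        have hb := bal k (by omega)
        have hd := hTdown (k + 1) (by omega) (by omega)
        simp only [Nat.add_sub_cancel] at hd
        rw [hTup k hkpos (by omega), hd] at hb
        have hcc : ((N.choose (k + 1) : ℝ)) * ((k : ℝ) + 1)
            = (N.choose k : ℝ) * ((N : ℝ) - (k : ℝ)) := by
          have h := Nat.choose_succ_right_eq N k
          have h2 : ((N.choose (k + 1) * (k + 1) : ℕ) : ℝ) = ((N.choose k * (N - k) : ℕ) : ℝ) := by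
            exact_mod_cast h
          push_cast [Nat.cast_sub (show k ≤ N by omega)] at h2
          linear_combination h2
        have hb2 : s k * ((N : ℝ) - (k : ℝ)) = s (k + 1) * ((k : ℝ) + 1) := by
          field_simp at hb
          push_cast at hb
          linear_combination hb
        have hk1R : ((k : ℝ) + 1) ≠ 0 := by positivity
        apply mul_right_cancel₀ hk1R
        push_cast
        calc s (k + 1) * ((k : ℝ) + 1) = s k * ((N : ℝ) - (k : ℝ)) := hb2.symm
          _ = 2 * μ * s 0 * (N.choose k : ℝ) * ((N : ℝ) - (k : ℝ)) := by rw [hsk]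
          _ = 2 * μ * s 0 * (N.choose (k + 1) : ℝ) * ((k : ℝ) + 1) := by
              linear_combination (-(2 * μ * s 0)) * hcc
  -- s N = s 0
  have hsN : s N = s 0 := by
    have hb := bal (N - 1) (by omega)
    have hup := hTup (N - 1) (by omega) (by omega)
    have hNN : N - 1 + 1 = N := by omega
    rw [hNN] at hb hup
    rw [hup, hTN] at hb
    have hf := hform (N - 1) (by omega) (by omega)
    have hch : (N.choose (N - 1)) = N := by
      rw [Nat.choose_symm (show 1 ≤ N by omega), Nat.choose_one_right]
    rw [hf, hch] at hb
    have hcast : ((N - 1 : ℕ) : ℝ) = (N : ℝ) - 1 := by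
      push_cast [Nat.cast_sub (show 1 ≤ N by omega)]; ring
    rw [hcast] at hb
    have hL : 2 * μ * s 0 * (N : ℝ) * (((N : ℝ) - ((N : ℝ) - 1)) / (2 * (N : ℝ))) = μ * s 0 := by
      field_simp
      ring
    rw [hL] at hb
    rw [mul_comm (s N) μ] at hb
    exact (mul_left_cancel₀ hμ0.ne' hb).symm
  -- normalization
  have hdec : ∀ f : ℕ → ℝ, ∑ i ∈ Finset.range (N + 1), f i
      = f 0 + (∑ i ∈ Finset.Ico 1 N, f i) + f N := by
    intro f
    rw [Finset.sum_range_succ, Finset.range_eq_Ico,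
      Finset.sum_eq_sum_Ico_succ_bot (show 0 < N by omega)]
  have hmid : ∑ i ∈ Finset.Ico 1 N, s i = 2 * μ * s 0 * ((2:ℝ) ^ N - 2) := by
    have h1 : ∑ i ∈ Finset.Ico 1 N, s i
        = ∑ i ∈ Finset.Ico 1 N, 2 * μ * s 0 * ((N.choose i : ℝ)) := by
      apply Finset.sum_congr rfl
      intro i hi
      rw [Finset.mem_Ico] at hi
      exact hform i (by omega) hi.2
    rw [h1, ← Finset.mul_sum]
    congr 1
    have h2 : ((2:ℝ)) ^ N = ∑ i ∈ Finset.range (N + 1), ((N.choose i : ℝ)) := by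
      exact_mod_cast (Nat.sum_range_choose N).symm
    rw [hdec (fun i => ((N.choose i : ℝ)))] at h2
    simp only [Nat.choose_zero_right, Nat.choose_self, Nat.cast_one] at h2
    linarith
  have h2le : (2:ℝ) ≤ 2 ^ N := by
    calc (2:ℝ) = 2 ^ 1 := (pow_one 2).symm
    _ ≤ 2 ^ N := by
        apply pow_le_pow_right₀ one_le_two (by omega)
  have hD : (0:ℝ) < 2 + 2 * μ * ((2:ℝ) ^ N - 2) := by nlinarith
  have hsum := hs1
  rw [hdec s, hmid, hsN] at hsum
  have hs0eq : s 0 = 1 / (2 + 2 * μ * ((2:ℝ) ^ N - 2)) := by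
    rw [eq_div_iff hD.ne']
    linear_combination hsum
  have hs0pos : 0 < s 0 := by rw [hs0eq]; positivity
  refine ⟨hs0eq, hsN.trans hs0eq, ?_, ?_⟩
  · intro j hj0 hjN
    rw [hform j hj0 hjN, hs0eq]
    ring
  · intro hE j hj0 hjN hne
    have hh0 : 0 < N / 2 := by omega
    have hhN : N / 2 < N := by omega
    rw [hform j hj0 hjN, hform (N / 2) hh0 hhN]
    have hch := choose_lt_middle hN hE (le_of_lt hjN) hne
    have hcR : (N.choose j : ℝ) < (N.choose (N / 2) : ℝ) := by exact_mod_cast hch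
    have hc : (0:ℝ) < 2 * μ * s 0 := by positivity
    exact (mul_lt_mul_iff_right₀ hc).mpr hcR
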